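/- Let d ≥ 4 be a real number, let Z ~ N(0,1), and let U be the d-quantization of Z. Then E[U²] ≤ (1.6/d)·exp(−d²/8). -/

import Mathlib

open MeasureTheory ProbabilityTheory Set Filter Real

/-! ### Auxiliary integrability and tail estimates for the standard Gaussian -/

lemma qsm_int_exp : Integrable (fun x : ℝ => Real.exp (-x ^ 2 / 2)) := by
  have h := integrable_exp_neg_mul_sq (show (0:ℝ) < 1/2 by norm_num)
  have e : (fun x : ℝ => Real.exp (-(1/2) * x ^ 2)) = fun x : ℝ => Real.exp (-x ^ 2 / 2) := by
    funext x; congr 1; ring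
  rw [e] at h; exact h

lemma qsm_int_sq_exp : Integrable (fun x : ℝ => x ^ 2 * Real.exp (-x ^ 2 / 2)) := by
  have h := integrable_rpow_mul_exp_neg_mul_sq (show (0:ℝ) < 1/2 by norm_num)
    (show (-1:ℝ) < 2 by norm_num)
  have e : (fun x : ℝ => x ^ (2:ℝ) * Real.exp (-(1/2) * x ^ 2))
      = fun x : ℝ => x ^ 2 * Real.exp (-x ^ 2 / 2) := by
    funext x
    rw [show ((2:ℝ)) = ((2:ℕ):ℝ) by norm_num, Real.rpow_natCast]
    congr 1; ring
  rw [e] at h; exact h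

lemma qsm_int_x_exp : Integrable (fun x : ℝ => x * Real.exp (-x ^ 2 / 2)) := by
  have h := integrable_mul_exp_neg_mul_sq (show (0:ℝ) < 1/2 by norm_num)
  have e : (fun x : ℝ => x * Real.exp (-(1/2) * x ^ 2))
      = fun x : ℝ => x * Real.exp (-x ^ 2 / 2) := by
    funext x; congr 1; ring
  rw [e] at h; exact h

lemma qsm_int_cube_exp : Integrable (fun x : ℝ => x ^ 3 * Real.exp (-x ^ 2 / 2)) := by
  have h := integrable_rpow_mul_exp_neg_mul_sq (show (0:ℝ) < 1/2 by norm_num)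
    (show (-1:ℝ) < 3 by norm_num)
  have e : (fun x : ℝ => x ^ (3:ℝ) * Real.exp (-(1/2) * x ^ 2))
      = fun x : ℝ => x ^ 3 * Real.exp (-x ^ 2 / 2) := by
    funext x
    rw [show ((3:ℝ)) = ((3:ℕ):ℝ) by norm_num, Real.rpow_natCast]
    congr 1; ring
  rw [e] at h; exact h

lemma qsm_tendsto_exp : Tendsto (fun x : ℝ => Real.exp (-x ^ 2 / 2)) atTop (nhds 0) := by
  apply Real.tendsto_exp_atBot.comp
  have h : Tendsto (fun x : ℝ => x ^ 2 / 2) atTop atTop :=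
    (tendsto_pow_atTop two_ne_zero).atTop_div_const (by norm_num)
  have h2 := tendsto_neg_atBot_iff.mpr h
  refine h2.congr (fun x => by ring)

lemma qsm_integral_x_exp (t : ℝ) :
    ∫ x in Set.Ioi t, x * Real.exp (-x ^ 2 / 2) = Real.exp (-t ^ 2 / 2) := by
  have hderiv : ∀ x ∈ Set.Ici t,
      HasDerivAt (fun y : ℝ => -Real.exp (-y ^ 2 / 2)) (x * Real.exp (-x ^ 2 / 2)) x := by
    intro x _
    have h1 : HasDerivAt (fun y : ℝ => -y ^ 2 / 2) (-x) x := by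
      convert ((hasDerivAt_pow 2 x).neg).div_const 2 using 1
      all_goals first | rfl | ring
    have h2 := (h1.exp).neg
    convert h2 using 1
    all_goals first | rfl | ring
  have h := integral_Ioi_of_hasDerivAt_of_tendsto' hderiv
    qsm_int_x_exp.integrableOn qsm_tendsto_exp.neg
  rw [h]; simp

lemma qsm_tendsto_sq_exp :
    Tendsto (fun x : ℝ => -((x ^ 2 + 2) * Real.exp (-x ^ 2 / 2))) atTop (nhds 0) := by
  have h0 : Tendsto (fun u : ℝ => 2 * (u * Real.exp (-u)) + 2 * Real.exp (-u)) atTop (nhds 0) := by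
    have h1 := tendsto_pow_mul_exp_neg_atTop_nhds_zero 1
    simp only [pow_one] at h1
    have h2 : Tendsto (fun u : ℝ => Real.exp (-u)) atTop (nhds 0) :=
      Real.tendsto_exp_atBot.comp (tendsto_neg_atBot_iff.mpr tendsto_id)
    have := (h1.const_mul 2).add (h2.const_mul 2)
    simpa using this
  have hcomp : Tendsto (fun x : ℝ => x ^ 2 / 2) atTop atTop :=
    (tendsto_pow_atTop two_ne_zero).atTop_div_const (by norm_num)
  have h := (h0.comp hcomp).neg
  simp only [neg_zero] at h ⊢
  refine h.congr (fun x => ?_)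
  simp only [Function.comp]
  rw [show (-x^2/2 : ℝ) = -(x^2/2) by ring]
  ring

lemma qsm_integral_cube_exp (t : ℝ) :
    ∫ x in Set.Ioi t, x ^ 3 * Real.exp (-x ^ 2 / 2) = (t ^ 2 + 2) * Real.exp (-t ^ 2 / 2) := by
  have hderiv : ∀ x ∈ Set.Ici t,
      HasDerivAt (fun y : ℝ => -((y ^ 2 + 2) * Real.exp (-y ^ 2 / 2)))
        (x ^ 3 * Real.exp (-x ^ 2 / 2)) x := by
    intro x _
    have h1 : HasDerivAt (fun y : ℝ => y ^ 2 + 2) (2 * x) x := by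
      convert (hasDerivAt_pow 2 x).add_const 2 using 1
      all_goals first | rfl | norm_num
    have he : HasDerivAt (fun y : ℝ => -y ^ 2 / 2) (-x) x := by
      convert ((hasDerivAt_pow 2 x).neg).div_const 2 using 1
      all_goals first | rfl | ring
    have h2 := (h1.mul he.exp).neg
    convert h2 using 1
    all_goals first | rfl | ring
  have h := integral_Ioi_of_hasDerivAt_of_tendsto' hderiv
    qsm_int_cube_exp.integrableOn qsm_tendsto_sq_exp
  rw [h]; ring

lemma qsm_tail1 {t : ℝ} (ht : 0 < t) :
    ∫ x in Set.Ioi t, Real.exp (-x ^ 2 / 2) ≤ Real.exp (-t ^ 2 / 2) / t := by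
  have hmono : ∫ x in Set.Ioi t, Real.exp (-x ^ 2 / 2)
      ≤ ∫ x in Set.Ioi t, t⁻¹ * (x * Real.exp (-x ^ 2 / 2)) := by
    refine setIntegral_mono_on qsm_int_exp.integrableOn
      ((qsm_int_x_exp.const_mul t⁻¹).integrableOn) measurableSet_Ioi (fun x hx => ?_)
    have hx : t < x := hx
    have h1 : 1 ≤ t⁻¹ * x := by
      rw [inv_mul_eq_div, le_div_iff₀ ht]; linarith
    nlinarith [Real.exp_pos (-x^2/2)]
  calc ∫ x in Set.Ioi t, Real.exp (-x ^ 2 / 2)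
      ≤ ∫ x in Set.Ioi t, t⁻¹ * (x * Real.exp (-x ^ 2 / 2)) := hmono
    _ = t⁻¹ * ∫ x in Set.Ioi t, x * Real.exp (-x ^ 2 / 2) := integral_const_mul _ _
    _ = Real.exp (-t ^ 2 / 2) / t := by rw [qsm_integral_x_exp]; rw [inv_mul_eq_div]

lemma qsm_tail2 {t : ℝ} (ht : 0 < t) :
    ∫ x in Set.Ioi t, x ^ 2 * Real.exp (-x ^ 2 / 2)
      ≤ (t ^ 2 + 2) / t * Real.exp (-t ^ 2 / 2) := by
  have hmono : ∫ x in Set.Ioi t, x ^ 2 * Real.exp (-x ^ 2 / 2)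
      ≤ ∫ x in Set.Ioi t, t⁻¹ * (x ^ 3 * Real.exp (-x ^ 2 / 2)) := by
    refine setIntegral_mono_on qsm_int_sq_exp.integrableOn
      ((qsm_int_cube_exp.const_mul t⁻¹).integrableOn) measurableSet_Ioi (fun x hx => ?_)
    have hx : t < x := hx
    have h1 : x ≤ t⁻¹ * x ^ 2 := by
      rw [inv_mul_eq_div, le_div_iff₀ ht]; nlinarith
    have h2 : (0:ℝ) < Real.exp (-x^2/2) := Real.exp_pos _
    calc x ^ 2 * Real.exp (-x ^ 2 / 2) = x * (x * Real.exp (-x^2/2)) := by ring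
      _ ≤ t⁻¹ * x ^ 2 * (x * Real.exp (-x^2/2)) :=
          mul_le_mul_of_nonneg_right h1 (le_of_lt (mul_pos (lt_trans ht hx) h2))
      _ = t⁻¹ * (x ^ 3 * Real.exp (-x ^ 2 / 2)) := by ring
  calc ∫ x in Set.Ioi t, x ^ 2 * Real.exp (-x ^ 2 / 2)
      ≤ ∫ x in Set.Ioi t, t⁻¹ * (x ^ 3 * Real.exp (-x ^ 2 / 2)) := hmono
    _ = t⁻¹ * ∫ x in Set.Ioi t, x ^ 3 * Real.exp (-x ^ 2 / 2) := integral_const_mul _ _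
    _ = (t ^ 2 + 2) / t * Real.exp (-t ^ 2 / 2) := by
        rw [qsm_integral_cube_exp]; field_simp

lemma qsm_abs_set_eq (t : ℝ) :
    {x : ℝ | t ≤ |x|} = Set.Iic (-t) ∪ Set.Ici t := by
  ext x
  simp only [Set.mem_setOf_eq, Set.mem_union, Set.mem_Iic, Set.mem_Ici, le_abs]
  constructor
  · rintro (h | h)
    · exact Or.inr h
    · exact Or.inl (by linarith)
  · rintro (h | h)
    · exact Or.inr (by linarith)
    · exact Or.inl h

lemma qsm_abs_set_meas (t : ℝ) : MeasurableSet {x : ℝ | t ≤ |x|} :=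
  measurableSet_le measurable_const measurable_abs

lemma qsm_abs_tail {t : ℝ} (ht : 0 < t) (h : ℝ → ℝ) (heven : ∀ x, h (-x) = h x)
    (hint : Integrable h) :
    ∫ x in {x : ℝ | t ≤ |x|}, h x = 2 * ∫ x in Set.Ioi t, h x := by
  rw [qsm_abs_set_eq t,
    setIntegral_union (Iic_disjoint_Ici.mpr (by intro hc; linarith)) measurableSet_Ici
      hint.integrableOn hint.integrableOn]
  have h1 : ∫ x in Set.Iic (-t), h x = ∫ x in Set.Ioi t, h x := by
    rw [← integral_comp_neg_Ioi]
    simp_rw [heven]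
  rw [h1, integral_Ici_eq_integral_Ioi]
  ring

/-! ### The dominating function `qsmG` -/

noncomputable def qsmG (d x : ℝ) : ℝ :=
  (if d/2 ≤ |x| then (1:ℝ) else 0) + (if 3*d/2 ≤ |x| then 16/(9*d^2) * x^2 else 0)

lemma qsm_g_nonneg (d x : ℝ) : 0 ≤ qsmG d x := by
  unfold qsmG
  have h1 : (0:ℝ) ≤ if d/2 ≤ |x| then (1:ℝ) else 0 := by split_ifs <;> norm_num
  have h2 : (0:ℝ) ≤ if 3*d/2 ≤ |x| then 16/(9*d^2) * x^2 else 0 := by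
    split_ifs <;> positivity
  linarith

lemma qsm_g_meas (d : ℝ) : Measurable (qsmG d) := by
  unfold qsmG
  refine Measurable.add ?_ ?_
  · exact Measurable.ite (qsm_abs_set_meas _) measurable_const measurable_const
  · exact Measurable.ite (qsm_abs_set_meas _)
      ((measurable_id.pow_const 2).const_mul _) measurable_const

lemma qsm_decomp (d : ℝ) :
    (fun x : ℝ => gaussianPDFReal 0 1 x * qsmG d x)
      = fun x : ℝ => (Real.sqrt (2*π))⁻¹ *
          (Set.indicator {y : ℝ | d/2 ≤ |y|} (fun y => Real.exp (-y^2/2)) x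
            + Set.indicator {y : ℝ | 3*d/2 ≤ |y|}
                (fun y => 16/(9*d^2) * (y^2 * Real.exp (-y^2/2))) x) := by
  funext x
  have hpdf : gaussianPDFReal 0 1 x = (Real.sqrt (2*π))⁻¹ * Real.exp (-x^2/2) := by
    unfold gaussianPDFReal
    push_cast
    norm_num
  rw [hpdf]
  unfold qsmG
  simp only [Set.indicator_apply, Set.mem_setOf_eq]
  split_ifs <;> ring

lemma qsm_integrable (d : ℝ) :
    Integrable (fun x : ℝ => gaussianPDFReal 0 1 x * qsmG d x) := by
  rw [qsm_decomp]
  exact (((qsm_int_exp.indicator (qsm_abs_set_meas _)).add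
    ((qsm_int_sq_exp.const_mul _).indicator (qsm_abs_set_meas _))).const_mul _)

/-! ### The key pointwise bound -/

lemma qsm_key {d : ℝ} (hd : 4 ≤ d) (ℓ : ℤ) {x : ℝ}
    (h1 : d*ℓ - d/2 ≤ x) (h2 : x ≤ d*ℓ + d/2) :
    ((ℓ:ℝ))^2 ≤ qsmG d x := by
  have hd0 : (0:ℝ) < d := by linarith
  by_cases h0 : ℓ = 0
  · subst h0
    simpa using qsm_g_nonneg d x
  have habs : d * |(ℓ:ℝ)| - d/2 ≤ |x| := by
    rcases le_or_gt 0 ((ℓ:ℝ)) with h | h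
    · rw [abs_of_nonneg h]
      linarith [le_abs_self x]
    · rw [abs_of_neg h]
      linarith [neg_abs_le x]
  have h1ℓ : (1:ℝ) ≤ |(ℓ:ℝ)| := by
    have := Int.one_le_abs (by simpa using h0)
    calc (1:ℝ) = ((1:ℤ):ℝ) := by norm_num
      _ ≤ ((|ℓ|:ℤ):ℝ) := by exact_mod_cast this
      _ = |(ℓ:ℝ)| := by push_cast; ring
  by_cases h2ℓ' : 2 ≤ |ℓ|
  · have h2ℓ : (2:ℝ) ≤ |(ℓ:ℝ)| := by
      calc (2:ℝ) = ((2:ℤ):ℝ) := by norm_num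
        _ ≤ ((|ℓ|:ℤ):ℝ) := by exact_mod_cast h2ℓ'
        _ = |(ℓ:ℝ)| := by push_cast; ring
    set L := |(ℓ:ℝ)| with hLdef
    have hy : 3*d/2 ≤ |x| := by nlinarith
    have hy1 : d/2 ≤ |x| := by nlinarith
    unfold qsmG
    rw [if_pos hy1, if_pos hy]
    have hxL : d*(L - 1/2) ≤ |x| := by linarith
    have hp : (0:ℝ) ≤ d*(L-1/2) := by nlinarith
    have hs2 : (d*(L-1/2))^2 ≤ |x|^2 := by nlinarith [abs_nonneg x]
    have h7 : (0:ℝ) ≤ (L-2)*(7*L-2) := mul_nonneg (by linarith) (by linarith)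
    have h8 : (0:ℝ) ≤ d^2*((L-2)*(7*L-2)) := mul_nonneg (sq_nonneg d) h7
    have hsq : L^2 * (9*d^2) ≤ 16*|x|^2 := by nlinarith
    have h9 : (0:ℝ) < 9*d^2 := by positivity
    have hfin : ((ℓ:ℝ))^2 ≤ 16/(9*d^2) * x^2 := by
      rw [div_mul_eq_mul_div, le_div_iff₀ h9, ← sq_abs (ℓ:ℝ), ← hLdef]
      calc L^2 * (9*d^2) ≤ 16*|x|^2 := hsq
        _ = 16 * x^2 := by rw [sq_abs]
    linarith
  · have habs1 : |ℓ| = 1 := by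
      have hlt : |ℓ| < 2 := not_le.mp h2ℓ'
      have h1z : 1 ≤ |ℓ| := Int.one_le_abs (by simpa using h0)
      have hle : |ℓ| ≤ 1 := Int.lt_add_one_iff.mp (by linarith)
      exact le_antisymm hle h1z
    have hL1 : |(ℓ:ℝ)| = 1 := by
      calc |(ℓ:ℝ)| = ((|ℓ|:ℤ):ℝ) := by push_cast; ring
        _ = 1 := by rw [habs1]; norm_num
    have hsq1 : ((ℓ:ℝ))^2 = 1 := by
      rw [← sq_abs, hL1]; norm_num
    have hy1 : d/2 ≤ |x| := by nlinarith
    unfold qsmG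
    rw [if_pos hy1, hsq1]
    split_ifs with h
    · have : (0:ℝ) ≤ 16/(9*d^2) * x^2 := by positivity
      linarith
    · norm_num

/-! ### The final numeric inequality -/

lemma qsm_final {d : ℝ} (hd : 4 ≤ d) :
    (Real.sqrt (2*π))⁻¹ * (2 * (Real.exp (-(d/2)^2/2) / (d/2))
      + 16/(9*d^2) * (2 * (((3*d/2)^2 + 2)/(3*d/2) * Real.exp (-(3*d/2)^2/2))))
      ≤ 1.6/d * Real.exp (-d^2/8) := by
  have hd0 : (0:ℝ) < d := by linarith
  have hs : (2.5066:ℝ) ≤ Real.sqrt (2*π) := by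
    rw [show (2.5066:ℝ) = √(2.5066^2) by rw [Real.sqrt_sq]; norm_num]
    apply Real.sqrt_le_sqrt
    nlinarith [Real.pi_gt_d6]
  have hs0 : (0:ℝ) < Real.sqrt (2*π) := by linarith
  set si := (Real.sqrt (2*π))⁻¹ with hsidef
  have hsi0 : (0:ℝ) ≤ si := by positivity
  have hsile : si ≤ 2.5066⁻¹ := by
    rw [hsidef]
    exact inv_anti₀ (by norm_num) hs
  have hsile1 : si ≤ 1 := le_trans hsile (by norm_num)
  set q := Real.exp (-d^2) with hqdef
  have hq0 : (0:ℝ) ≤ q := Real.exp_nonneg _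
  have hq16 : q ≤ 1/65536 := by
    have h1 : q ≤ Real.exp (-16) := Real.exp_le_exp.mpr (by nlinarith)
    have h2 : (65536:ℝ) ≤ Real.exp 16 := by
      have he : (2:ℝ) ≤ Real.exp 1 := by nlinarith [Real.exp_one_gt_d9]
      have : (2:ℝ)^(16:ℕ) ≤ (Real.exp 1)^(16:ℕ) := pow_le_pow_left₀ (by norm_num) he 16
      calc (65536:ℝ) = 2^(16:ℕ) := by norm_num
        _ ≤ (Real.exp 1)^(16:ℕ) := this
        _ = Real.exp ((16:ℕ) * 1) := (Real.exp_nat_mul 1 16).symm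
        _ = Real.exp 16 := by norm_num
    have h3 : Real.exp (-16) ≤ 1/65536 := by
      rw [Real.exp_neg, one_div]
      exact inv_anti₀ (by norm_num) h2
    exact le_trans h1 h3
  have hE1 : Real.exp (-(d/2)^2/2) = Real.exp (-d^2/8) := by congr 1; ring
  have hE2 : Real.exp (-(3*d/2)^2/2) = Real.exp (-d^2/8) * q := by
    rw [hqdef, ← Real.exp_add]; congr 1; ring
  rw [hE1, hE2]
  have hEpos : (0:ℝ) < Real.exp (-d^2/8) := Real.exp_pos _
  have hmain : si * (2 * (Real.exp (-d^2/8) / (d/2))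
      + 16/(9*d^2) * (2 * (((3*d/2)^2 + 2)/(3*d/2) * (Real.exp (-d^2/8) * q))))
      = (si * (4/d) + si * q * ((144*d^2+128)/(27*d^3))) * Real.exp (-d^2/8) := by
    field_simp
    ring
  rw [hmain]
  have hcoef : si * (4/d) + si * q * ((144*d^2+128)/(27*d^3)) ≤ 1.6/d := by
    have hb1 : si * (4/d) ≤ 2.5066⁻¹ * (4/d) :=
      mul_le_mul_of_nonneg_right hsile (by positivity)
    have hfrac : (144*d^2+128)/(27*d^3) ≤ 6/d := by
      rw [div_le_div_iff₀ (by positivity) hd0]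
      nlinarith
    have hb2 : si * q * ((144*d^2+128)/(27*d^3)) ≤ 1 * (1/65536) * (6/d) := by
      apply mul_le_mul
      · apply mul_le_mul hsile1 hq16 hq0 (by norm_num)
      · exact hfrac
      · positivity
      · norm_num
    have heq : 2.5066⁻¹ * (4/d) + 1 * (1/65536) * (6/d) = (4/2.5066 + 6/65536) / d := by
      ring
    have hnum : (4/2.5066 + 6/65536 : ℝ) ≤ 1.6 := by norm_num
    calc si * (4/d) + si * q * ((144*d^2+128)/(27*d^3))
        ≤ 2.5066⁻¹ * (4/d) + 1 * (1/65536) * (6/d) := by linarith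
      _ = (4/2.5066 + 6/65536) / d := heq
      _ ≤ 1.6/d := (div_le_div_iff_of_pos_right hd0).mpr hnum
  exact mul_le_mul_of_nonneg_right hcoef hEpos.le

/-! ### The real-integral bound -/

lemma qsm_real_bound {d : ℝ} (hd : 4 ≤ d) :
    ∫ x, gaussianPDFReal 0 1 x * qsmG d x ≤ 1.6 / d * Real.exp (-d ^ 2 / 8) := by
  have hd0 : (0:ℝ) < d := by linarith
  have ht1 : (0:ℝ) < d/2 := by linarith
  have ht2 : (0:ℝ) < 3*d/2 := by linarith
  have heven1 : ∀ x : ℝ, Real.exp (-(-x)^2/2) = Real.exp (-x^2/2) := by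
    intro x; rw [neg_sq]
  have heven2 : ∀ x : ℝ, 16/(9*d^2) * ((-x)^2 * Real.exp (-(-x)^2/2))
      = 16/(9*d^2) * (x^2 * Real.exp (-x^2/2)) := by
    intro x; rw [neg_sq]
  have hI1 : Integrable (Set.indicator {y : ℝ | d/2 ≤ |y|} (fun y => Real.exp (-y^2/2))) :=
    qsm_int_exp.indicator (qsm_abs_set_meas _)
  have hI2 : Integrable (Set.indicator {y : ℝ | 3*d/2 ≤ |y|}
      (fun y => 16/(9*d^2) * (y^2 * Real.exp (-y^2/2)))) :=
    (qsm_int_sq_exp.const_mul _).indicator (qsm_abs_set_meas _)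
  rw [qsm_decomp d, integral_const_mul, integral_add hI1 hI2,
    integral_indicator (qsm_abs_set_meas _), integral_indicator (qsm_abs_set_meas _),
    qsm_abs_tail ht1 _ heven1 qsm_int_exp,
    qsm_abs_tail ht2 _ heven2 (qsm_int_sq_exp.const_mul _)]
  refine le_trans ?_ (qsm_final hd)
  refine mul_le_mul_of_nonneg_left ?_ (by positivity)
  have hA1 : 2 * ∫ x in Set.Ioi (d/2), Real.exp (-x^2/2)
      ≤ 2 * (Real.exp (-(d/2)^2/2) / (d/2)) :=
    mul_le_mul_of_nonneg_left (qsm_tail1 ht1) (by norm_num)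
  have hA2 : 2 * ∫ x in Set.Ioi (3*d/2), 16/(9*d^2) * (x^2 * Real.exp (-x^2/2))
      ≤ 16/(9*d^2) * (2 * (((3*d/2)^2 + 2)/(3*d/2) * Real.exp (-(3*d/2)^2/2))) := by
    rw [integral_const_mul]
    have hb := qsm_tail2 ht2
    calc 2 * (16/(9*d^2) * ∫ x in Set.Ioi (3*d/2), x^2 * Real.exp (-x^2/2))
        = 16/(9*d^2) * (2 * ∫ x in Set.Ioi (3*d/2), x^2 * Real.exp (-x^2/2)) := by ring
      _ ≤ 16/(9*d^2) * (2 * (((3*d/2)^2 + 2)/(3*d/2) * Real.exp (-(3*d/2)^2/2))) := by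
          refine mul_le_mul_of_nonneg_left ?_ (by positivity)
          exact mul_le_mul_of_nonneg_left hb (by norm_num)
  linarith

/-! ### Main theorem -/

/-- **Second moment of the `d`-quantization of a standard Gaussian (Lemma 1).**
If `Z ~ N(0,1)` and `U` is the `d`-quantization of `Z` (i.e. `U = ℓ` whenever
`Z ∈ (dℓ − d/2, dℓ + d/2]`), then for `d ≥ 4` one has `E[U²] ≤ (1.6/d)·exp(−d²/8)`. -/
theorem quantization_second_moment
    {Ω : Type*} [MeasurableSpace Ω] (P : Measure Ω) [IsProbabilityMeasure P]
    (d : ℝ) (hd : 4 ≤ d)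
    (Z : Ω → ℝ) (hZ : Measurable Z) (hZlaw : P.map Z = gaussianReal 0 1)
    (U : Ω → ℤ)
    (hquant : ∀ ω, ∀ ℓ : ℤ,
      Z ω ∈ Set.Ioc (d * ℓ - d / 2) (d * ℓ + d / 2) → U ω = ℓ) :
    ∫⁻ ω, ENNReal.ofReal ((U ω : ℝ) ^ 2) ∂P
      ≤ ENNReal.ofReal (1.6 / d * Real.exp (-d ^ 2 / 8)) := by
  have hd0 : (0:ℝ) < d := by linarith
  have hA : ∀ ω, ((U ω : ℝ)) ^ 2 ≤ qsmG d (Z ω) := by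
    intro ω
    have hc1 : (Z ω/d - 1/2 : ℝ) ≤ ((⌈Z ω/d - 1/2⌉ : ℤ) : ℝ) := Int.le_ceil _
    have hc2 : ((⌈Z ω/d - 1/2⌉ : ℤ) : ℝ) < (Z ω/d - 1/2) + 1 := Int.ceil_lt_add_one _
    have hxd : d * (Z ω/d) = Z ω := by field_simp
    set ℓ : ℤ := ⌈Z ω/d - 1/2⌉ with hℓ
    have hmem : Z ω ∈ Set.Ioc (d*ℓ - d/2) (d*ℓ + d/2) := by
      constructor
      · nlinarith [mul_lt_mul_of_pos_left hc2 hd0]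
      · nlinarith [mul_le_mul_of_nonneg_left hc1 hd0.le]
    rw [hquant ω ℓ hmem]
    exact qsm_key hd ℓ (le_of_lt hmem.1) hmem.2
  have hgmeas : Measurable fun x : ℝ => ENNReal.ofReal (qsmG d x) :=
    (qsm_g_meas d).ennreal_ofReal
  calc ∫⁻ ω, ENNReal.ofReal ((U ω : ℝ) ^ 2) ∂P
      ≤ ∫⁻ ω, ENNReal.ofReal (qsmG d (Z ω)) ∂P :=
        lintegral_mono fun ω => ENNReal.ofReal_le_ofReal (hA ω)
    _ = ∫⁻ x, ENNReal.ofReal (qsmG d x) ∂(P.map Z) := (lintegral_map hgmeas hZ).symm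
    _ = ∫⁻ x, ENNReal.ofReal (qsmG d x) ∂(gaussianReal 0 1) := by rw [hZlaw]
    _ = ∫⁻ x, (gaussianPDF 0 1 * fun x => ENNReal.ofReal (qsmG d x)) x := by
        rw [gaussianReal_of_var_ne_zero 0 one_ne_zero,
          lintegral_withDensity_eq_lintegral_mul _ (measurable_gaussianPDF 0 1) hgmeas]
    _ = ∫⁻ x, ENNReal.ofReal (gaussianPDFReal 0 1 x * qsmG d x) := by
        congr 1; funext x
        simp only [Pi.mul_apply, gaussianPDF]
        rw [← ENNReal.ofReal_mul (gaussianPDFReal_nonneg 0 1 x)]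
    _ = ENNReal.ofReal (∫ x, gaussianPDFReal 0 1 x * qsmG d x) :=
        (ofReal_integral_eq_lintegral_ofReal (qsm_integrable d)
          (Filter.Eventually.of_forall fun x =>
            mul_nonneg (gaussianPDFReal_nonneg 0 1 x) (qsm_g_nonneg d x))).symm
    _ ≤ ENNReal.ofReal (1.6 / d * Real.exp (-d ^ 2 / 8)) :=
        ENNReal.ofReal_le_ofReal (qsm_real_bound hd)
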